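/- Suppose additionally there is a linear functional deg on V such that deg(α) ∈ {−1, 0, 1} for every root α ∈ Δ, deg(α) ∈ {0, 1} for every positive root α ∈ Δ⁺, and every root of degree 0 has support contained in X := {α ∈ Π : deg α = 0}. Let Δ₀⁺ = {α ∈ Δ⁺ : deg α = 0}. Then a finite subset S ⊆ Δ⁺ is a slice with S ∩ Δ₀⁺ = ∅ (equivalently, S = I(w) for some X-reduced w ∈ W) if and only if the following two conditions hold: (1) S ∩ Δ₀⁺ = ∅, and (2) for every α ∈ S and every β ∈ Δ₀⁺ such that α − β ∈ Δ, one has α − β ∈ S. -/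

import Mathlib

/-!
A (possibly infinite) reduced crystallographic root system with a fixed system of simple
roots.  Since the simple roots `Π` are linearly independent and every root is a linear
combination of them, we may coordinatize: the span of `Π` is identified with the free
module `ι →₀ ℚ` on the index set `ι` of simple roots, the simple root indexed by `i`
being `Finsupp.single i 1`.  The coefficients `c_α` of an element `γ = ∑_{α ∈ Π} c_α α`
are then just the values `γ i`, and `supp γ` is `γ.support`.
-/

/-- A reduced crystallographic root system (possibly infinite) together with a chosen set
of simple roots, coordinatized in the basis of simple roots.  The field `coroot α` is the
linear functional `⟨·, α∨⟩` (its values are only constrained for `α ∈ Δ`). -/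
structure SimpleRootSystem (ι : Type*) where
  /-- The set of roots. -/
  Δ : Set (ι →₀ ℚ)
  /-- The coroot pairing `β ↦ ⟨β, α∨⟩`. -/
  coroot : (ι →₀ ℚ) → ((ι →₀ ℚ) →ₗ[ℚ] ℚ)
  /-- Roots are nonzero. -/
  zero_not_mem : (0 : ι →₀ ℚ) ∉ Δ
  /-- `⟨α, α∨⟩ = 2`. -/
  pairing_self : ∀ α ∈ Δ, coroot α α = 2
  /-- Crystallographic: `⟨β, α∨⟩ ∈ ℤ`. -/
  pairing_int : ∀ α ∈ Δ, ∀ β ∈ Δ, ∃ n : ℤ, coroot α β = (n : ℚ)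
  /-- The reflection `s_α(β) = β - ⟨β, α∨⟩ α` maps roots to roots. -/
  reflect_mem : ∀ α ∈ Δ, ∀ β ∈ Δ, β - coroot α β • α ∈ Δ
  /-- Reduced: the only multiples of a root `α` that are roots are `±α`. -/
  reduced : ∀ α ∈ Δ, ∀ c : ℚ, c • α ∈ Δ → c = 1 ∨ c = -1
  /-- Every simple root is a root. -/
  simple_mem : ∀ i : ι, (Finsupp.single i 1 : ι →₀ ℚ) ∈ Δ
  /-- Every root is a linear combination of the simple roots whose coefficients are either
  all nonnegative integers or all nonpositive integers. -/
  coeff_sign : ∀ α ∈ Δ, (∀ i, ∃ n : ℕ, α i = (n : ℚ)) ∨ (∀ i, ∃ n : ℕ, α i = -(n : ℚ))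

namespace SimpleRootSystem

variable {ι : Type*}

/-- The simple root indexed by `i`. -/
noncomputable def simple (i : ι) : ι →₀ ℚ := Finsupp.single i 1

variable (R : SimpleRootSystem ι)

/-- The positive roots `Δ⁺`. -/
def posRoots : Set (ι →₀ ℚ) := {α ∈ R.Δ | ∀ i, 0 ≤ α i}

/-- The negative roots `Δ⁻`. -/
def negRoots : Set (ι →₀ ℚ) := {α ∈ R.Δ | ∀ i, α i ≤ 0}

/-- The reflection `s_α : v ↦ v - ⟨v, α∨⟩ α`, as a linear endomorphism. -/
noncomputable def reflection (α : ι →₀ ℚ) : Module.End ℚ (ι →₀ ℚ) :=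
  LinearMap.id - (R.coroot α).smulRight α

/-- The Weyl group `W`, the group generated by the simple reflections, realized as the
closure of the set of simple reflections inside the endomorphism monoid (each simple
reflection is an involution, so this closure is closed under inverses). -/
noncomputable def weylGroup : Submonoid (Module.End ℚ (ι →₀ ℚ)) :=
  Submonoid.closure {g | ∃ i : ι, g = R.reflection (simple i)}

/-- The length `l(w)`: the least `k` such that `w` is a product of `k` simple
reflections. -/
noncomputable def length (w : Module.End ℚ (ι →₀ ℚ)) : ℕ :=
  sInf {k | ∃ f : Fin k → ι,
    w = (List.ofFn fun j => R.reflection (simple (f j))).prod}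

/-- The inversion set `I(w) = Δ⁺ ∩ w(Δ⁻)`. -/
noncomputable def inversions (w : Module.End ℚ (ι →₀ ℚ)) : Set (ι →₀ ℚ) :=
  R.posRoots ∩ (⇑w '' R.negRoots)

/-- The Dynkin diagram: the graph on the (indices of the) simple roots in which two
distinct simple roots `α ≠ β` are adjacent iff `⟨α, β∨⟩ ≠ 0` (equivalently, in a root
system, `⟨β, α∨⟩ ≠ 0`; we state the symmetrized form). -/
noncomputable def dynkin : SimpleGraph ι where
  Adj i j := i ≠ j ∧
    (R.coroot (simple j) (simple i) ≠ 0 ∨ R.coroot (simple i) (simple j) ≠ 0)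
  symm := ⟨fun _ _ h => ⟨h.1.symm, h.2.symm⟩⟩
  loopless := ⟨fun _ h => h.1 rfl⟩

end SimpleRootSystem

namespace SimpleRootSystem

variable {ι : Type*} (R : SimpleRootSystem ι)

/-- For `X ⊆ Π`, the set `Δ(X)` of roots whose support is contained in `X`. -/
def deltaX (X : Set ι) : Set (ι →₀ ℚ) := {γ ∈ R.Δ | ↑γ.support ⊆ X}

/-- `w` is `X`-reduced if its inversion set contains no root supported in `X`. -/
noncomputable def IsXReduced (X : Set ι) (w : Module.End ℚ (ι →₀ ℚ)) : Prop :=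
  R.inversions w ∩ R.deltaX X = ∅

/-- `Y^(j)`: the set of simple roots at (extended) graph distance less than `j` from
`Y = Π \ X` in the Dynkin diagram. -/
noncomputable def yNbhd (X : Set ι) (j : ℕ) : Set ι :=
  {i | ∃ y, y ∉ X ∧ R.dynkin.edist i y < (j : ℕ∞)}

/-- The subgroup (realized as a submonoid of the endomorphism monoid, as in `weylGroup`)
generated by the simple reflections `s_α` for `α` in a set `s` of simple roots. -/
noncomputable def standardParabolic (s : Set ι) : Submonoid (Module.End ℚ (ι →₀ ℚ)) :=
  Submonoid.closure {g | ∃ i ∈ s, g = R.reflection (simple i)}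

end SimpleRootSystem

namespace SimpleRootSystem

variable {ι : Type*} (R : SimpleRootSystem ι)

/-- A finite set `S ⊆ Δ⁺` of positive roots is a *slice* if `S ∪ (Δ⁻ \ (-S))` is closed
under addition (whenever the sum of two of its elements is a root, the sum belongs to
it). -/
def IsSlice (S : Set (ι →₀ ℚ)) : Prop :=
  ∀ α ∈ S ∪ (R.negRoots \ (-S)), ∀ β ∈ S ∪ (R.negRoots \ (-S)),
    α + β ∈ R.Δ → α + β ∈ S ∪ (R.negRoots \ (-S))

/-! ### Auxiliary lemmas -/

section Basics

lemma root_ne_zero {α : ι →₀ ℚ} (h : α ∈ R.Δ) : α ≠ 0 :=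
  fun e => R.zero_not_mem (e ▸ h)

lemma neg_mem {α : ι →₀ ℚ} (h : α ∈ R.Δ) : -α ∈ R.Δ := by
  have h2 := R.reflect_mem α h α h
  rwa [R.pairing_self α h, show α - (2:ℚ) • α = -α by module] at h2

lemma posRoots_subset : R.posRoots ⊆ R.Δ := fun _ h => h.1
lemma negRoots_subset : R.negRoots ⊆ R.Δ := fun _ h => h.1

lemma pos_or_neg {α : ι →₀ ℚ} (h : α ∈ R.Δ) : α ∈ R.posRoots ∨ α ∈ R.negRoots := by
  rcases R.coeff_sign α h with hc | hc
  · exact Or.inl ⟨h, fun i => by obtain ⟨n, hn⟩ := hc i; rw [hn]; positivity⟩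
  · exact Or.inr ⟨h, fun i => by
      obtain ⟨n, hn⟩ := hc i; rw [hn]; exact neg_nonpos.mpr (Nat.cast_nonneg n)⟩

lemma not_pos_neg {α : ι →₀ ℚ} (hp : α ∈ R.posRoots) (hn : α ∈ R.negRoots) : False := by
  apply R.zero_not_mem
  have : α = 0 := Finsupp.ext fun i => le_antisymm (hn.2 i) (hp.2 i)
  exact this ▸ hp.1

lemma pos_of_coord {α : ι →₀ ℚ} (h : α ∈ R.Δ) {i : ι} (hi : 0 < α i) :
    α ∈ R.posRoots := by
  rcases R.pos_or_neg h with h' | h'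
  · exact h'
  · exact absurd (h'.2 i) (not_le.mpr hi)

lemma neg_of_coord {α : ι →₀ ℚ} (h : α ∈ R.Δ) {i : ι} (hi : α i < 0) :
    α ∈ R.negRoots := by
  rcases R.pos_or_neg h with h' | h'
  · exact absurd (h'.2 i) (not_le.mpr hi)
  · exact h'

lemma neg_mem_posRoots {α : ι →₀ ℚ} (h : α ∈ R.negRoots) : -α ∈ R.posRoots :=
  ⟨R.neg_mem h.1, fun i => by simpa using h.2 i⟩

lemma neg_mem_negRoots {α : ι →₀ ℚ} (h : α ∈ R.posRoots) : -α ∈ R.negRoots :=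
  ⟨R.neg_mem h.1, fun i => by simpa using h.2 i⟩

lemma simple_apply_self (i : ι) : (simple i : ι →₀ ℚ) i = 1 := by
  simp [simple]

lemma simple_apply_ne {i j : ι} (h : j ≠ i) : (simple i : ι →₀ ℚ) j = 0 := by
  simp [simple, Finsupp.single_apply, Ne.symm h]

lemma simple_posRoots (i : ι) : simple i ∈ R.posRoots := by
  refine ⟨R.simple_mem i, fun j => ?_⟩
  rcases eq_or_ne j i with rfl | hj
  · rw [simple_apply_self]; norm_num
  · rw [simple_apply_ne hj]

lemma eq_simple_of {α : ι →₀ ℚ} (h : α ∈ R.Δ) {i : ι} (hz : ∀ j, j ≠ i → α j = 0)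
    (hpos : 0 ≤ α i) : α = simple i := by
  have hα : α = (α i) • simple i := by
    ext j
    rcases eq_or_ne j i with rfl | hj
    · rw [Finsupp.smul_apply, simple_apply_self, smul_eq_mul, mul_one]
    · rw [Finsupp.smul_apply, simple_apply_ne hj, hz j hj, smul_eq_mul, mul_zero]
  rcases R.reduced (simple i) (R.simple_mem i) (α i) (by rw [← hα]; exact h) with h1 | h1
  · rw [hα, h1, one_smul]
  · exact absurd hpos (by rw [h1]; norm_num)

/-- Expansion of a linear functional along the coordinates. -/
lemma linear_expand (F : (ι →₀ ℚ) →ₗ[ℚ] ℚ) (γ : ι →₀ ℚ) :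
    F γ = ∑ i ∈ γ.support, γ i * F (simple i) := by
  conv_lhs => rw [← Finsupp.sum_single γ]
  rw [map_finsuppSum, Finsupp.sum]
  refine Finset.sum_congr rfl fun i _ => ?_
  rw [show Finsupp.single i (γ i) = (γ i) • simple i by
        rw [simple, Finsupp.smul_single', mul_one],
      map_smul, smul_eq_mul]

/-- A positive root pairs positively against its own coroot with some simple root. -/
lemma exists_simple_pairing_pos {γ : ι →₀ ℚ} (hγ : γ ∈ R.Δ) (hp : γ ∈ R.posRoots) :
    ∃ i, 0 < γ i ∧ ∃ k : ℤ, 1 ≤ k ∧ R.coroot γ (simple i) = (k : ℚ) := by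
  by_contra hcon
  push_neg at hcon
  have h2 : R.coroot γ γ = 2 := R.pairing_self γ hγ
  rw [linear_expand] at h2
  have hle : ∑ i ∈ γ.support, γ i * R.coroot γ (simple i) ≤ 0 := by
    apply Finset.sum_nonpos
    intro i hi
    have hpos_i : 0 < γ i :=
      lt_of_le_of_ne (hp.2 i) (Ne.symm (Finsupp.mem_support_iff.mp hi))
    obtain ⟨k, hk⟩ := R.pairing_int γ hγ (simple i) (R.simple_mem i)
    have hk1 : R.coroot γ (simple i) ≤ 0 := by
      by_contra hgt
      push_neg at hgt
      have hkpos : 1 ≤ k := by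
        have : (0:ℚ) < (k:ℚ) := by rw [← hk]; exact hgt
        exact_mod_cast this
      exact hcon i hpos_i k hkpos hk
    exact mul_nonpos_of_nonneg_of_nonpos hpos_i.le hk1
  rw [h2] at hle
  norm_num at hle

/-- A root whose support is not a single index has a positive coordinate away
from any given index, provided it is positive. -/
lemma exists_other_coord {γ : ι →₀ ℚ} (h : γ ∈ R.Δ) (hp : γ ∈ R.posRoots) {i : ι}
    (hns : ∀ j, γ ≠ simple j) : ∃ l, l ≠ i ∧ 0 < γ l := by
  by_contra hcon
  push_neg at hcon
  refine hns i (R.eq_simple_of h (fun j hj => ?_) (hp.2 i))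
  exact le_antisymm (hcon j hj) (hp.2 j)

end Basics

section Weyl

lemma reflection_apply (α v : ι →₀ ℚ) :
    R.reflection α v = v - R.coroot α v • α := by
  simp [reflection, LinearMap.sub_apply, LinearMap.smulRight_apply]

lemma reflection_mem_weylGroup (i : ι) : R.reflection (simple i) ∈ R.weylGroup :=
  Submonoid.subset_closure ⟨i, rfl⟩

lemma sref_invol (i : ι) (v : ι →₀ ℚ) :
    R.reflection (simple i) (R.reflection (simple i) v) = v := by
  rw [reflection_apply, reflection_apply, map_sub, map_smul,
    R.pairing_self (simple i) (R.simple_mem i)]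
  rw [smul_eq_mul]
  module

lemma sref_root {α : ι →₀ ℚ} (h : α ∈ R.Δ) (i : ι) :
    R.reflection (simple i) α ∈ R.Δ := by
  rw [reflection_apply]
  exact R.reflect_mem (simple i) (R.simple_mem i) α h

/-- Every element of the Weyl group has an inverse in the Weyl group mapping
roots to roots. -/
lemma weyl_inv {w : Module.End ℚ (ι →₀ ℚ)} (hw : w ∈ R.weylGroup) :
    ∃ w' ∈ R.weylGroup, (∀ v, w (w' v) = v) ∧ (∀ v, w' (w v) = v) ∧
      (∀ α ∈ R.Δ, w α ∈ R.Δ) ∧ (∀ α ∈ R.Δ, w' α ∈ R.Δ) := by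
  induction hw using Submonoid.closure_induction with
  | mem x hx =>
      obtain ⟨i, rfl⟩ := hx
      refine ⟨R.reflection (simple i), R.reflection_mem_weylGroup i,
        R.sref_invol i, R.sref_invol i, fun α h => R.sref_root h i,
        fun α h => R.sref_root h i⟩
  | one =>
      exact ⟨1, one_mem _, fun v => rfl, fun v => rfl, fun α h => h, fun α h => h⟩
  | mul x y hx hy ihx ihy =>
      obtain ⟨x', hx', hxx', hx'x, hxΔ, hx'Δ⟩ := ihx
      obtain ⟨y', hy', hyy', hy'y, hyΔ, hy'Δ⟩ := ihy
      refine ⟨y' * x', mul_mem hy' hx', fun v => ?_, fun v => ?_,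
        fun α h => hxΔ _ (hyΔ _ h), fun α h => hy'Δ _ (hx'Δ _ h)⟩
      · show (x * y) ((y' * x') v) = v
        have : (y' * x') v = y' (x' v) := rfl
        rw [this, show (x * y) (y' (x' v)) = x (y (y' (x' v))) from rfl, hyy', hxx']
      · show (y' * x') ((x * y) v) = v
        have : (x * y) v = x (y v) := rfl
        rw [this, show (y' * x') (x (y v)) = y' (x' (x (y v))) from rfl, hx'x, hy'y]

/-- A simple reflection maps a negative root other than `-αⱼ` to a negative root. -/
lemma sref_neg_of_neg {β : ι →₀ ℚ} (hβ : β ∈ R.negRoots) {j : ι}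
    (hne : β ≠ -simple j) : R.reflection (simple j) β ∈ R.negRoots := by
  have hβΔ : β ∈ R.Δ := hβ.1
  have hroot : R.reflection (simple j) β ∈ R.Δ := R.sref_root hβΔ j
  have : ∃ l, l ≠ j ∧ β l < 0 := by
    by_contra hcon
    push_neg at hcon
    apply hne
    have : -β = simple j := by
      refine R.eq_simple_of (R.neg_mem hβΔ) (fun l hl => ?_) (by simpa using hβ.2 j)
      have hz : β l = 0 := le_antisymm (hβ.2 l) (hcon l hl)
      simp [hz]
    rw [← this, neg_neg]
  obtain ⟨l, hl, hlneg⟩ := this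
  apply R.neg_of_coord hroot (i := l)
  rw [reflection_apply, Finsupp.sub_apply, Finsupp.smul_apply, simple_apply_ne hl,
    smul_eq_mul, mul_zero, sub_zero]
  exact hlneg

lemma inversions_one : R.inversions 1 = ∅ := by
  ext β
  simp only [inversions, Set.mem_inter_iff, Set.mem_image, Set.mem_empty_iff_false,
    iff_false, not_and]
  rintro hp ⟨ζ, hζ, hζβ⟩
  have : ζ = β := by simpa using hζβ
  exact R.not_pos_neg hp (this ▸ hζ)

/-- Adding one inversion: `I(w sⱼ) = I(w) ∪ {w αⱼ}` when `w αⱼ > 0`. -/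
lemma inversions_mul_sref {w : Module.End ℚ (ι →₀ ℚ)} {w' : Module.End ℚ (ι →₀ ℚ)}
    (hww' : ∀ v, w (w' v) = v) (hw'w : ∀ v, w' (w v) = v)
    (hwΔ : ∀ α ∈ R.Δ, w α ∈ R.Δ) {j : ι} (hpos : w (simple j) ∈ R.posRoots) :
    R.inversions (w * R.reflection (simple j)) = insert (w (simple j)) (R.inversions w) := by
  ext β
  constructor
  · rintro ⟨hβpos, ζ, hζ, hζβ⟩
    have hζβ' : w (R.reflection (simple j) ζ) = β := hζβ
    rcases eq_or_ne ζ (-simple j) with rfl | hne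
    · left
      have h1 : R.reflection (simple j) (-simple j) = simple j := by
        rw [reflection_apply, map_neg, R.pairing_self (simple j) (R.simple_mem j)]
        module
      rw [← hζβ', h1]
    · right
      have hζ' : R.reflection (simple j) ζ ∈ R.negRoots := R.sref_neg_of_neg hζ hne
      exact ⟨hβpos, R.reflection (simple j) ζ, hζ', hζβ'⟩
  · intro hβ
    rcases hβ with rfl | hβ
    · refine ⟨hpos, -simple j, R.neg_mem_negRoots (R.simple_posRoots j), ?_⟩
      show w (R.reflection (simple j) (-simple j)) = w (simple j)
      congr 1
      rw [reflection_apply, map_neg, R.pairing_self (simple j) (R.simple_mem j)]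
      module
    · obtain ⟨hβpos, ζ, hζ, hζβ⟩ := hβ
      refine ⟨hβpos, R.reflection (simple j) ζ, ?_, ?_⟩
      · -- `sⱼ ζ` is negative: `ζ ≠ -αⱼ` since otherwise `β = w(-αⱼ) = -w(αⱼ)` is negative
        apply R.sref_neg_of_neg hζ
        rintro rfl
        have : β = -(w (simple j)) := by rw [← hζβ, map_neg]
        have hneg : β ∈ R.negRoots := this ▸ R.neg_mem_negRoots hpos
        exact absurd hβpos (fun h => R.not_pos_neg h hneg)
      · show w (R.reflection (simple j) (R.reflection (simple j) ζ)) = β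
        rw [R.sref_invol j ζ, hζβ]

end Weyl

section Deg

variable {deg : (ι →₀ ℚ) →ₗ[ℚ] ℚ}

lemma deg_neg_root (hdegpos : ∀ α ∈ R.posRoots, deg α = 0 ∨ deg α = 1)
    {α : ι →₀ ℚ} (h : α ∈ R.negRoots) : deg α = 0 ∨ deg α = -1 := by
  rcases hdegpos (-α) (R.neg_mem_posRoots h) with h' | h'
  · rw [map_neg] at h'; left; linarith
  · rw [map_neg] at h'; right; linarith

lemma deg_one_of_S {S : Set (ι →₀ ℚ)} (hpos : S ⊆ R.posRoots)
    (hdegpos : ∀ α ∈ R.posRoots, deg α = 0 ∨ deg α = 1)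
    (hS0 : S ∩ {α ∈ R.posRoots | deg α = 0} = ∅) {α} (hα : α ∈ S) : deg α = 1 := by
  rcases hdegpos α (hpos hα) with h0 | h1
  · exfalso
    have hm : α ∈ S ∩ {α ∈ R.posRoots | deg α = 0} := ⟨hα, hpos hα, h0⟩
    rw [hS0] at hm
    exact hm
  · exact h1

/-- The mixed case in proving that a set satisfying (c) is a slice. -/
lemma slice_case_mixed (hdeg : ∀ α ∈ R.Δ, deg α = -1 ∨ deg α = 0 ∨ deg α = 1)
    (hdegpos : ∀ α ∈ R.posRoots, deg α = 0 ∨ deg α = 1)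
    {S : Set (ι →₀ ℚ)} (hpos : S ⊆ R.posRoots)
    (hS0 : S ∩ {α ∈ R.posRoots | deg α = 0} = ∅)
    (hc : ∀ α ∈ S, ∀ β ∈ {α ∈ R.posRoots | deg α = 0}, α - β ∈ R.Δ → α - β ∈ S)
    {α β : ι →₀ ℚ} (hα : α ∈ S) (hβ : β ∈ R.negRoots \ (-S)) (hΔ : α + β ∈ R.Δ) :
    α + β ∈ S ∪ (R.negRoots \ (-S)) := by
  have hdα : deg α = 1 := R.deg_one_of_S hpos hdegpos hS0 hα
  rcases R.deg_neg_root hdegpos hβ.1 with hdβ | hdβ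
  · -- `deg β = 0` : use (c) with `-β ∈ Δ₀⁺`
    left
    have hmem : -β ∈ {α ∈ R.posRoots | deg α = 0} :=
      ⟨R.neg_mem_posRoots hβ.1, by rw [map_neg, hdβ, neg_zero]⟩
    have := hc α hα (-β) hmem (by rw [show α - -β = α + β by module]; exact hΔ)
    rwa [show α - -β = α + β by module] at this
  · -- `deg β = -1`, so `deg (α+β) = 0`
    have hd : deg (α + β) = 0 := by rw [map_add, hdα, hdβ]; ring
    rcases R.pos_or_neg hΔ with hp | hn
    · exfalso
      have hmem : α + β ∈ {α ∈ R.posRoots | deg α = 0} := ⟨hp, hd⟩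
      have h2 := hc α hα (α + β) hmem (by rw [show α - (α + β) = -β by module]; exact R.neg_mem hβ.1.1)
      rw [show α - (α + β) = -β by module] at h2
      exact hβ.2 (by simpa using h2)
    · right
      refine ⟨hn, fun hm => ?_⟩
      have : -(α + β) ∈ S := by simpa using hm
      have := R.deg_one_of_S hpos hdegpos hS0 this
      rw [map_neg, hd] at this
      norm_num at this

lemma slice_of_c (hdeg : ∀ α ∈ R.Δ, deg α = -1 ∨ deg α = 0 ∨ deg α = 1)
    (hdegpos : ∀ α ∈ R.posRoots, deg α = 0 ∨ deg α = 1)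
    {S : Set (ι →₀ ℚ)} (hpos : S ⊆ R.posRoots)
    (hS0 : S ∩ {α ∈ R.posRoots | deg α = 0} = ∅)
    (hc : ∀ α ∈ S, ∀ β ∈ {α ∈ R.posRoots | deg α = 0}, α - β ∈ R.Δ → α - β ∈ S) :
    R.IsSlice S := by
  intro α hα β hβ hΔ
  rcases hα with hα | hα <;> rcases hβ with hβ | hβ
  · -- both in S : impossible, degree 2
    exfalso
    have h1 := R.deg_one_of_S hpos hdegpos hS0 hα
    have h2 := R.deg_one_of_S hpos hdegpos hS0 hβ
    have := hdeg (α + β) hΔ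
    rw [map_add, h1, h2] at this
    rcases this with h | h | h <;> norm_num at h
  · exact R.slice_case_mixed hdeg hdegpos hpos hS0 hc hα hβ hΔ
  · rw [add_comm] at hΔ ⊢
    exact R.slice_case_mixed hdeg hdegpos hpos hS0 hc hβ hα hΔ
  · -- both negative
    right
    have hn : α + β ∈ R.negRoots :=
      ⟨hΔ, fun i => by
        rw [Finsupp.add_apply]
        exact add_nonpos (hα.1.2 i) (hβ.1.2 i)⟩
    refine ⟨hn, fun hm => ?_⟩
    have hmS : -(α + β) ∈ S := by simpa using hm
    have hd1 : deg (-(α + β)) = 1 := R.deg_one_of_S hpos hdegpos hS0 hmS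
    rw [map_neg, map_add] at hd1
    rcases R.deg_neg_root hdegpos hα.1 with hdα | hdα <;>
      rcases R.deg_neg_root hdegpos hβ.1 with hdβ | hdβ
    · rw [hdα, hdβ] at hd1; norm_num at hd1
    · -- deg α = 0 : subtract `-α` from `-(α+β)`
      have hmem : -α ∈ {α ∈ R.posRoots | deg α = 0} :=
        ⟨R.neg_mem_posRoots hα.1, by rw [map_neg, hdα, neg_zero]⟩
      have h2 := hc _ hmS (-α) hmem (by rw [show -(α + β) - -α = -β by module]; exact R.neg_mem hβ.1.1)
      rw [show -(α + β) - -α = -β by module] at h2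
      exact hβ.2 (by simpa using h2)
    · -- deg β = 0
      have hmem : -β ∈ {α ∈ R.posRoots | deg α = 0} :=
        ⟨R.neg_mem_posRoots hβ.1, by rw [map_neg, hdβ, neg_zero]⟩
      have h2 := hc _ hmS (-β) hmem (by rw [show -(α + β) - -β = -α by module]; exact R.neg_mem hα.1.1)
      rw [show -(α + β) - -β = -α by module] at h2
      exact hα.2 (by simpa using h2)
    · rw [hdα, hdβ] at hd1; norm_num at hd1

lemma c_of_slice (hdeg : ∀ α ∈ R.Δ, deg α = -1 ∨ deg α = 0 ∨ deg α = 1)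
    (hdegpos : ∀ α ∈ R.posRoots, deg α = 0 ∨ deg α = 1)
    {S : Set (ι →₀ ℚ)} (hpos : S ⊆ R.posRoots) (hslice : R.IsSlice S)
    (hS0 : S ∩ {α ∈ R.posRoots | deg α = 0} = ∅) :
    ∀ α ∈ S, ∀ β ∈ {α ∈ R.posRoots | deg α = 0}, α - β ∈ R.Δ → α - β ∈ S := by
  intro α hα β hβ hΔ
  have hmβ : -β ∈ R.negRoots \ (-S) := by
    refine ⟨R.neg_mem_negRoots hβ.1, fun hm => ?_⟩
    have hβS : β ∈ S := by simpa using hm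
    have : β ∈ S ∩ {α ∈ R.posRoots | deg α = 0} := ⟨hβS, hβ⟩
    rw [hS0] at this
    exact this
  have h2 := hslice α (Or.inl hα) (-β) (Or.inr hmβ)
    (by rw [show α + -β = α - β by module]; exact hΔ)
  rw [show α + -β = α - β by module] at h2
  rcases h2 with h2 | h2
  · exact h2
  · exfalso
    have hd : deg (α - β) = 1 := by
      rw [map_sub, R.deg_one_of_S hpos hdegpos hS0 hα, hβ.2, sub_zero]
    rcases R.deg_neg_root hdegpos h2.1 with h | h <;> rw [hd] at h <;> norm_num at h

/-- A slice is co-closed. -/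
lemma coclosed_of_slice {S : Set (ι →₀ ℚ)} (hslice : R.IsSlice S)
    {p q : ι →₀ ℚ} (hp : p ∈ R.posRoots) (hq : q ∈ R.posRoots) (hpq : p + q ∈ S) :
    p ∈ S ∨ q ∈ S := by
  by_contra hcon
  push_neg at hcon
  have hmq : -q ∈ R.negRoots \ (-S) :=
    ⟨R.neg_mem_negRoots hq, fun hm => hcon.2 (by simpa using hm)⟩
  have h2 := hslice (p + q) (Or.inl hpq) (-q) (Or.inr hmq)
    (by rw [show p + q + -q = p by module]; exact hp.1)
  rw [show p + q + -q = p by module] at h2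
  rcases h2 with h2 | h2
  · exact hcon.1 h2
  · exact R.not_pos_neg hp h2.1

lemma deltaX_of_deg_zero (hdeg0 : ∀ α ∈ R.Δ, deg α = 0 →
      ↑α.support ⊆ {i : ι | deg (simple i) = 0})
    {β : ι →₀ ℚ} (hβ : β ∈ R.Δ) (h0 : deg β = 0) :
    β ∈ R.deltaX {i : ι | deg (simple i) = 0} :=
  ⟨hβ, hdeg0 β hβ h0⟩

/-- Inversion sets of `X`-reduced elements satisfy condition (c). -/
lemma c_of_inversions (hdeg : ∀ α ∈ R.Δ, deg α = -1 ∨ deg α = 0 ∨ deg α = 1)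
    (hdegpos : ∀ α ∈ R.posRoots, deg α = 0 ∨ deg α = 1)
    (hdeg0 : ∀ α ∈ R.Δ, deg α = 0 → ↑α.support ⊆ {i : ι | deg (simple i) = 0})
    {w : Module.End ℚ (ι →₀ ℚ)} (hw : w ∈ R.weylGroup)
    (hX : R.IsXReduced {i : ι | deg (simple i) = 0} w) :
    R.inversions w ∩ {α ∈ R.posRoots | deg α = 0} = ∅ ∧
      ∀ α ∈ R.inversions w, ∀ β ∈ {α ∈ R.posRoots | deg α = 0},
        α - β ∈ R.Δ → α - β ∈ R.inversions w := by
  obtain ⟨w', hw', hww', hw'w, hwΔ, hw'Δ⟩ := R.weyl_inv hw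
  have hdisj : R.inversions w ∩ {α ∈ R.posRoots | deg α = 0} = ∅ := by
    rw [Set.eq_empty_iff_forall_notMem]
    rintro β ⟨hβI, hβ0⟩
    have : β ∈ R.inversions w ∩ R.deltaX {i : ι | deg (simple i) = 0} :=
      ⟨hβI, R.deltaX_of_deg_zero hdeg0 hβ0.1.1 hβ0.2⟩
    rw [hX] at this
    exact this
  refine ⟨hdisj, ?_⟩
  rintro α hαI β hβ hΔ
  have hαpos : α ∈ R.posRoots := hαI.1
  have hdα : deg α = 1 := by
    rcases hdegpos α hαpos with h0 | h1
    · exfalso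
      have : α ∈ R.inversions w ∩ {α ∈ R.posRoots | deg α = 0} := ⟨hαI, hαpos, h0⟩
      rw [hdisj] at this
      exact this
    · exact h1
  have hd : deg (α - β) = 1 := by rw [map_sub, hdα, hβ.2, sub_zero]
  have hpos' : α - β ∈ R.posRoots := by
    rcases R.pos_or_neg hΔ with h | h
    · exact h
    · rcases R.deg_neg_root hdegpos h with h' | h' <;> rw [hd] at h' <;> norm_num at h'
  -- pull back by w⁻¹
  obtain ⟨hαpos', ζ, hζ, hζα⟩ := hαI
  have hw'α : w' α = ζ := by rw [← hζα, hw'w]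
  have hw'βpos : w' β ∈ R.posRoots := by
    rcases R.pos_or_neg (hw'Δ β hβ.1.1) with h | h
    · exact h
    · exfalso
      have hβI : β ∈ R.inversions w := ⟨hβ.1, w' β, h, by rw [hww']⟩
      have : β ∈ R.inversions w ∩ R.deltaX {i : ι | deg (simple i) = 0} :=
        ⟨hβI, R.deltaX_of_deg_zero hdeg0 hβ.1.1 hβ.2⟩
      rw [hX] at this
      exact this
  have hneg : w' (α - β) ∈ R.negRoots := by
    refine ⟨hw'Δ _ hΔ, fun i => ?_⟩
    rw [map_sub, Finsupp.sub_apply, hw'α]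
    exact sub_nonpos.mpr (le_trans (hζ.2 i) (hw'βpos.2 i))
  exact ⟨hpos', w' (α - β), hneg, by rw [hww']⟩

end Deg

section Attach

variable {deg : (ι →₀ ℚ) →ₗ[ℚ] ℚ}

/-- The attachment lemma: if `I(w₁) = S \ {β}` with `β ∈ S`, then `w₁⁻¹ β` is a
simple root. -/
lemma attach (hdeg : ∀ α ∈ R.Δ, deg α = -1 ∨ deg α = 0 ∨ deg α = 1)
    (hdegpos : ∀ α ∈ R.posRoots, deg α = 0 ∨ deg α = 1)
    {S : Set (ι →₀ ℚ)} (hfin : S.Finite) (hpos : S ⊆ R.posRoots)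
    (hS0 : S ∩ {α ∈ R.posRoots | deg α = 0} = ∅)
    (hco : ∀ p q : ι →₀ ℚ, p ∈ R.posRoots → q ∈ R.posRoots → p + q ∈ S → p ∈ S ∨ q ∈ S)
    {β : ι →₀ ℚ} (hβS : β ∈ S)
    {w₁ w₁' : Module.End ℚ (ι →₀ ℚ)}
    (hww' : ∀ v, w₁ (w₁' v) = v) (hw'w : ∀ v, w₁' (w₁ v) = v)
    (hwΔ : ∀ α ∈ R.Δ, w₁ α ∈ R.Δ) (hw'Δ : ∀ α ∈ R.Δ, w₁' α ∈ R.Δ)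
    (hinv : R.inversions w₁ = S \ {β}) :
    ∃ j, w₁ (simple j) = β := by
  have hβpos : β ∈ R.posRoots := hpos hβS
  have hdegβ : deg β = 1 := R.deg_one_of_S hpos hdegpos hS0 hβS
  set γ : ι →₀ ℚ := w₁' β with hγdef
  have hβw : w₁ γ = β := hww' β
  have hγΔ : γ ∈ R.Δ := hw'Δ β hβpos.1
  have hγpos : γ ∈ R.posRoots := by
    rcases R.pos_or_neg hγΔ with h | h
    · exact h
    · exfalso
      have hmem : β ∈ R.inversions w₁ := ⟨hβpos, γ, h, hβw⟩
      rw [hinv] at hmem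
      exact hmem.2 rfl
  by_cases hsimp : ∃ j, γ = simple j
  · obtain ⟨j, hj⟩ := hsimp
    exact ⟨j, by rw [← hj]; exact hβw⟩
  push_neg at hsimp
  exfalso
  -- `γ` is not the sum of two positive roots
  have hcase : ∀ a b : ι →₀ ℚ, a ∈ R.posRoots → b ∈ R.Δ →
      w₁ a ∈ R.negRoots → β = w₁ a + w₁ b → False := by
    intro a b ha hb hna hsum'
    have h1 : -(w₁ a) ∈ R.inversions w₁ :=
      ⟨R.neg_mem_posRoots hna, -a, R.neg_mem_negRoots ha, by rw [map_neg]⟩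
    rw [hinv] at h1
    have hd1 : deg (-(w₁ a)) = 1 := R.deg_one_of_S hpos hdegpos hS0 h1.1
    have hd2 : deg (w₁ b) = 2 := by
      have hb2 : w₁ b = β + -(w₁ a) := by rw [hsum']; module
      rw [hb2, map_add, hdegβ, hd1]
      norm_num
    rcases hdeg (w₁ b) (hwΔ b hb) with h | h | h <;> rw [hd2] at h <;> norm_num at h
  have hrig : ∀ p q : ι →₀ ℚ, p ∈ R.posRoots → q ∈ R.posRoots → γ = p + q → False := by
    intro p q hp hq he
    have hsum : β = w₁ p + w₁ q := by rw [← hβw, he, map_add]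
    rcases R.pos_or_neg (hwΔ p hp.1) with hwp | hwp
    · rcases R.pos_or_neg (hwΔ q hq.1) with hwq | hwq
      · -- both images positive : co-closedness gives a contradiction
        have hβeq : w₁ p + w₁ q ∈ S := hsum ▸ hβS
        have hub : ∀ r o : ι →₀ ℚ, r ∈ R.posRoots → o ∈ R.posRoots → γ = r + o →
            w₁ r ∈ S → False := by
          intro r o hr ho hro hrS
          rcases eq_or_ne (w₁ r) β with hrβ | hrβ
          · have hrγ : r = γ := by rw [hγdef, ← hrβ, hw'w]
            have ho0 : o = 0 := by
              rw [hrγ] at hro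
              exact (left_eq_add.mp hro)
            exact R.root_ne_zero ho.1 ho0
          · have hmem : w₁ r ∈ R.inversions w₁ := by rw [hinv]; exact ⟨hrS, hrβ⟩
            obtain ⟨-, ζ, hζ, hζr⟩ := hmem
            have hζ' : ζ = r := by rw [← hw'w ζ, hζr, hw'w]
            exact R.not_pos_neg hr (hζ' ▸ hζ)
        rcases hco (w₁ p) (w₁ q) hwp hwq hβeq with h | h
        · exact hub p q hp hq he h
        · exact hub q p hq hp (he.trans (add_comm p q)) h
      · exact hcase q p hq hp.1 hwq (hsum.trans (add_comm _ _))
    · exact hcase p q hp hq.1 hwp hsum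
  -- choose `i` with `⟨αᵢ, γ∨⟩ = k ≥ 1`
  obtain ⟨i, hγi, k, hk1, hki⟩ := R.exists_simple_pairing_pos hγΔ hγpos
  obtain ⟨l, hli, hγl⟩ := R.exists_other_coord hγΔ hγpos (i := i) hsimp
  obtain ⟨A, hAdef⟩ : ∃ A, w₁ (simple i) = A := ⟨_, rfl⟩
  have hAΔ : A ∈ R.Δ := hAdef ▸ hwΔ _ (R.simple_mem i)
  have hwin : γ - simple i ∈ R.Δ → False := by
    intro hmem
    refine hrig (γ - simple i) (simple i) (R.pos_of_coord hmem (i := l) ?_)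
      (R.simple_posRoots i) (by module)
    rw [Finsupp.sub_apply, simple_apply_ne hli, sub_zero]
    exact hγl
  -- the root `k γ - αᵢ`
  have hsγi : simple i - (k : ℚ) • γ ∈ R.Δ := by
    have h' := R.reflect_mem γ hγΔ (simple i) (R.simple_mem i)
    rwa [hki] at h'
  have hδΔ : (k : ℚ) • γ - simple i ∈ R.Δ := by
    have h' := R.neg_mem hsγi
    rwa [show -(simple i - (k:ℚ)•γ) = (k:ℚ)•γ - simple i by module] at h'
  have hδw : w₁ ((k : ℚ) • γ - simple i) = (k : ℚ) • β - A := by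
    rw [map_sub, map_smul, hβw, hAdef]
  have hdA3 := hdeg A hAΔ
  have hdδ3 := hdeg _ (hwΔ _ hδΔ)
  rw [hδw, map_sub, map_smul, hdegβ, smul_eq_mul, mul_one] at hdδ3
  have hk12 : k = 1 ∨ k = 2 := by
    have h2 : (k : ℚ) ≤ 2 := by
      rcases hdA3 with h | h | h <;> rcases hdδ3 with h' | h' | h' <;> linarith
    have h2' : k ≤ 2 := by exact_mod_cast h2
    omega
  rcases hk12 with rfl | rfl
  · -- k = 1 : `γ - αᵢ` is a root, contradiction
    apply hwin
    have hki1 : R.coroot γ (simple i) = 1 := by rw [hki]; norm_num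
    have h' := R.reflect_mem γ hγΔ (simple i) (R.simple_mem i)
    rw [hki1, one_smul] at h'
    have h'' := R.neg_mem h'
    rwa [show -(simple i - γ) = γ - simple i by module] at h''
  -- now k = 2
  have hki2 : R.coroot γ (simple i) = 2 := by rw [hki]; norm_num
  push_cast at hdδ3
  have hdA1 : deg A = 1 := by
    rcases hdA3 with h | h | h <;> rcases hdδ3 with h' | h' | h' <;> first | linarith | assumption
  have hsγi2 : simple i - (2:ℚ) • γ ∈ R.Δ := by
    have h' := R.reflect_mem γ hγΔ (simple i) (R.simple_mem i)
    rwa [hki2] at h'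
  have hδΔ2 : (2:ℚ) • γ - simple i ∈ R.Δ := by
    have h' := R.neg_mem hsγi2
    rwa [show -(simple i - (2:ℚ)•γ) = (2:ℚ)•γ - simple i by module] at h'
  -- `t := ⟨γ, δ∨⟩`
  obtain ⟨t, ht⟩ := R.pairing_int _ hδΔ2 γ hγΔ
  have hreflt : γ - (t : ℚ) • ((2:ℚ)•γ - simple i) ∈ R.Δ := by
    have h' := R.reflect_mem _ hδΔ2 γ hγΔ
    rwa [ht] at h'
  have himgt : w₁ (γ - (t : ℚ) • ((2:ℚ)•γ - simple i)) = ((1:ℚ)-2*t)•β + (t:ℚ)•A := by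
    rw [map_sub, map_smul, map_sub, map_smul, hβw, hAdef]
    module
  have hdt := hdeg _ (hwΔ _ hreflt)
  rw [himgt, map_add, map_smul, map_smul, hdegβ, hdA1, smul_eq_mul, smul_eq_mul,
    mul_one, mul_one] at hdt
  have hδi : R.coroot ((2:ℚ)•γ - simple i) (simple i) = 2*(t:ℚ) - 2 := by
    have h2 := R.pairing_self _ hδΔ2
    rw [map_sub, map_smul, ht, smul_eq_mul] at h2
    linarith
  have ht012 : t = 0 ∨ t = 1 ∨ t = 2 := by
    have h' : (t:ℚ) = 0 ∨ (t:ℚ) = 1 ∨ (t:ℚ) = 2 := by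
      rcases hdt with h | h | h
      · right; right; linarith
      · right; left; linarith
      · left; linarith
    rcases h' with h | h | h
    · left; exact_mod_cast h
    · right; left; exact_mod_cast h
    · right; right; exact_mod_cast h
  rcases ht012 with rfl | rfl | rfl
  · -- t = 0 : `4γ - αᵢ` is a root of image degree 3
    have hroot := R.reflect_mem _ hδΔ2 (simple i) (R.simple_mem i)
    rw [hδi] at hroot
    have h4 : (4:ℚ)•γ - simple i ∈ R.Δ := by
      rwa [show simple i - (2*((0:ℤ):ℚ)-2)•((2:ℚ)•γ - simple i) = (4:ℚ)•γ - simple i by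
        push_cast; module] at hroot
    have himg : w₁ ((4:ℚ)•γ - simple i) = (4:ℚ)•β - A := by
      rw [map_sub, map_smul, hβw, hAdef]
    have hd := hdeg _ (hwΔ _ h4)
    rw [himg, map_sub, map_smul, hdegβ, hdA1, smul_eq_mul, mul_one] at hd
    rcases hd with h | h | h <;> norm_num at h
  · -- t = 1 : `γ - αᵢ` is a root
    apply hwin
    have h' := R.neg_mem hreflt
    rwa [show -(γ - ((1:ℤ):ℚ)•((2:ℚ)•γ - simple i)) = γ - simple i by push_cast; module] at h'
  -- t = 2
  obtain ⟨m, hm⟩ := R.pairing_int (simple i) (R.simple_mem i) γ hγΔ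
  have hsiγ : γ - (m:ℚ)•simple i ∈ R.Δ := by
    have h' := R.reflect_mem (simple i) (R.simple_mem i) γ hγΔ
    rwa [hm] at h'
  have himgm : w₁ (γ - (m:ℚ)•simple i) = β - (m:ℚ)•A := by
    rw [map_sub, map_smul, hβw, hAdef]
  have hdm := hdeg _ (hwΔ _ hsiγ)
  rw [himgm, map_sub, map_smul, hdegβ, hdA1, smul_eq_mul, mul_one] at hdm
  have hm012 : m = 0 ∨ m = 1 ∨ m = 2 := by
    have h' : (m:ℚ) = 0 ∨ (m:ℚ) = 1 ∨ (m:ℚ) = 2 := by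
      rcases hdm with h | h | h
      · right; right; linarith
      · right; left; linarith
      · left; linarith
    rcases h' with h | h | h
    · left; exact_mod_cast h
    · right; left; exact_mod_cast h
    · right; right; exact_mod_cast h
  rcases hm012 with rfl | rfl | rfl
  · -- m = 0 : `2γ + αᵢ` is a root of image degree 3
    have hcor : R.coroot (simple i) (simple i - (2:ℚ)•γ) = 2 := by
      rw [map_sub, map_smul, R.pairing_self (simple i) (R.simple_mem i), hm]
      norm_num
    have hroot := R.reflect_mem (simple i) (R.simple_mem i) _ hsγi2
    rw [hcor] at hroot
    have h2γ : (2:ℚ)•γ + simple i ∈ R.Δ := by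
      have h' := R.neg_mem hroot
      rwa [show -((simple i - (2:ℚ)•γ) - (2:ℚ)•simple i) = (2:ℚ)•γ + simple i by module] at h'
    have himg : w₁ ((2:ℚ)•γ + simple i) = (2:ℚ)•β + A := by
      rw [map_add, map_smul, hβw, hAdef]
    have hd := hdeg _ (hwΔ _ h2γ)
    rw [himg, map_add, map_smul, hdegβ, hdA1, smul_eq_mul, mul_one] at hd
    rcases hd with h | h | h <;> norm_num at h
  · -- m = 1 : `γ - αᵢ` is a root
    apply hwin
    rwa [show γ - ((1:ℤ):ℚ)•simple i = γ - simple i by push_cast; module] at hsiγ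
  -- m = 2 : the root `γ'' = γ - 2αᵢ`
  have hγ'' : γ - (2:ℚ)•simple i ∈ R.Δ := by
    rwa [show ((2:ℤ):ℚ) = (2:ℚ) by norm_num] at hsiγ
  have hγ''pos : γ - (2:ℚ)•simple i ∈ R.posRoots := by
    refine R.pos_of_coord hγ'' (i := l) ?_
    rw [Finsupp.sub_apply, Finsupp.smul_apply, simple_apply_ne hli, smul_eq_mul,
      mul_zero, sub_zero]
    exact hγl
  obtain ⟨e, he⟩ := R.pairing_int _ hγ'' γ hγΔ
  obtain ⟨c, hc⟩ := R.pairing_int _ hγ'' (simple i) (R.simple_mem i)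
  have hec : e = 2 + 2*c := by
    have h2 := R.pairing_self _ hγ''
    rw [map_sub, map_smul, he, hc, smul_eq_mul] at h2
    have : (e:ℚ) = 2 + 2*(c:ℚ) := by linarith
    exact_mod_cast this
  have hrefle : γ - (e:ℚ)•(γ - (2:ℚ)•simple i) ∈ R.Δ := by
    have h' := R.reflect_mem _ hγ'' γ hγΔ
    rwa [he] at h'
  have hγ''w : w₁ (γ - (2:ℚ)•simple i) = β - (2:ℚ)•A := by
    rw [map_sub, map_smul, hβw, hAdef]
  have himge : w₁ (γ - (e:ℚ)•(γ - (2:ℚ)•simple i)) = ((1:ℚ)-e)•β + (2*(e:ℚ))•A := by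
    rw [map_sub, map_smul, map_sub, map_smul, hβw, hAdef]
    module
  have hde := hdeg _ (hwΔ _ hrefle)
  rw [himge, map_add, map_smul, map_smul, hdegβ, hdA1, smul_eq_mul, smul_eq_mul,
    mul_one, mul_one] at hde
  have he20 : e = 0 ∨ e = -2 := by
    have h' : (e:ℚ) = -2 ∨ (e:ℚ) = -1 ∨ (e:ℚ) = 0 := by
      rcases hde with h | h | h
      · left; linarith
      · right; left; linarith
      · right; right; linarith
    have h'' : e = -2 ∨ e = -1 ∨ e = 0 := by
      rcases h' with h | h | h
      · left; exact_mod_cast h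
      · right; left; exact_mod_cast h
      · right; right; exact_mod_cast h
    omega
  rcases he20 with rfl | rfl
  · -- e = 0 : then `c = -1` and `γ - αᵢ` is a root
    have hc1 : R.coroot (γ - (2:ℚ)•simple i) (simple i) = -1 := by
      rw [hc]
      have : c = -1 := by omega
      rw [this]
      norm_num
    have hroot := R.reflect_mem _ hγ'' (simple i) (R.simple_mem i)
    rw [hc1] at hroot
    apply hwin
    rwa [show simple i - (-1:ℚ)•(γ - (2:ℚ)•simple i) = γ - simple i by module] at hroot
  -- e = -2 : then `c = -2` and the ladder gives infinitely many elements of `S`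
  have he2 : R.coroot (γ - (2:ℚ)•simple i) γ = -2 := by rw [he]; norm_num
  have hc2 : R.coroot (γ - (2:ℚ)•simple i) (simple i) = -2 := by
    rw [hc]
    have : c = -2 := by omega
    rw [this]
    norm_num
  have hladder : ∀ n : ℕ, ((4*(n:ℚ))•γ - (4*(n:ℚ)+1)•simple i) ∈ R.Δ := by
    intro n
    induction n with
    | zero =>
      have h' := R.neg_mem (R.simple_mem i)
      rwa [show (4*((0:ℕ):ℚ))•γ - (4*((0:ℕ):ℚ)+1)•simple i = -simple i by push_cast; module]
    | succ n ih =>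
      have h1 := R.reflect_mem γ hγΔ _ ih
      have hv1 : R.coroot γ ((4*(n:ℚ))•γ - (4*(n:ℚ)+1)•simple i) = -2 := by
        rw [map_sub, map_smul, map_smul, R.pairing_self γ hγΔ, hki2, smul_eq_mul, smul_eq_mul]
        ring
      rw [hv1] at h1
      have h1' : ((4*(n:ℚ)+2)•γ - (4*(n:ℚ)+1)•simple i) ∈ R.Δ := by
        rwa [show (4*(n:ℚ))•γ - (4*(n:ℚ)+1)•simple i - (-2:ℚ)•γ
            = (4*(n:ℚ)+2)•γ - (4*(n:ℚ)+1)•simple i by module] at h1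
      have h2 := R.reflect_mem _ hγ'' _ h1'
      have hv2 : R.coroot (γ - (2:ℚ)•simple i) ((4*(n:ℚ)+2)•γ - (4*(n:ℚ)+1)•simple i) = -2 := by
        rw [map_sub, map_smul, map_smul, he2, hc2, smul_eq_mul, smul_eq_mul]
        ring
      rw [hv2] at h2
      have h2' : ((4*(n:ℚ)+4)•γ - (4*(n:ℚ)+5)•simple i) ∈ R.Δ := by
        rwa [show (4*(n:ℚ)+2)•γ - (4*(n:ℚ)+1)•simple i - (-2:ℚ)•(γ - (2:ℚ)•simple i)
            = (4*(n:ℚ)+4)•γ - (4*(n:ℚ)+5)•simple i by module] at h2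
      rwa [show (4*((n+1:ℕ):ℚ))•γ - (4*((n+1:ℕ):ℚ)+1)•simple i
          = (4*(n:ℚ)+4)•γ - (4*(n:ℚ)+5)•simple i by push_cast; module]
  have hSn : ∀ n : ℕ, ((4*(n:ℚ)+5)•A - (4*(n:ℚ)+4)•β) ∈ S := by
    intro n
    have hω := hladder (n+1)
    have hω' : ((4*(n:ℚ)+4)•γ - (4*(n:ℚ)+5)•simple i) ∈ R.Δ := by
      rwa [show (4*((n+1:ℕ):ℚ))•γ - (4*((n+1:ℕ):ℚ)+1)•simple i
          = (4*(n:ℚ)+4)•γ - (4*(n:ℚ)+5)•simple i by push_cast; module] at hω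
    have hωpos : ((4*(n:ℚ)+4)•γ - (4*(n:ℚ)+5)•simple i) ∈ R.posRoots := by
      refine R.pos_of_coord hω' (i := l) ?_
      rw [Finsupp.sub_apply, Finsupp.smul_apply, Finsupp.smul_apply, simple_apply_ne hli,
        smul_eq_mul, smul_eq_mul, mul_zero, sub_zero]
      have hn4 : (0:ℚ) < 4*(n:ℚ)+4 := by positivity
      exact mul_pos hn4 hγl
    have hnegω : -((4*(n:ℚ)+4)•γ - (4*(n:ℚ)+5)•simple i) ∈ R.negRoots :=
      R.neg_mem_negRoots hωpos
    have himgω : w₁ (-((4*(n:ℚ)+4)•γ - (4*(n:ℚ)+5)•simple i))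
        = (4*(n:ℚ)+5)•A - (4*(n:ℚ)+4)•β := by
      rw [map_neg, map_sub, map_smul, map_smul, hβw, hAdef]
      module
    have hroot2 : ((4*(n:ℚ)+5)•A - (4*(n:ℚ)+4)•β) ∈ R.Δ := by
      rw [← himgω]
      exact hwΔ _ (R.neg_mem hω')
    have hdeg2 : deg ((4*(n:ℚ)+5)•A - (4*(n:ℚ)+4)•β) = 1 := by
      rw [map_sub, map_smul, map_smul, hdegβ, hdA1, smul_eq_mul, smul_eq_mul]
      ring
    have hp2 : ((4*(n:ℚ)+5)•A - (4*(n:ℚ)+4)•β) ∈ R.posRoots := by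
      rcases R.pos_or_neg hroot2 with h | h
      · exact h
      · exfalso
        rcases R.deg_neg_root hdegpos h with h' | h' <;> rw [hdeg2] at h' <;> norm_num at h'
    have hmem : ((4*(n:ℚ)+5)•A - (4*(n:ℚ)+4)•β) ∈ R.inversions w₁ :=
      ⟨hp2, _, hnegω, himgω⟩
    rw [hinv] at hmem
    exact hmem.1
  have hAβ : A ≠ β := by
    intro hAβ
    apply hsimp i
    rw [hγdef, ← hAβ, ← hAdef, hw'w]
  have hinj : Function.Injective (fun n : ℕ => ((4*(n:ℚ)+5)•A - (4*(n:ℚ)+4)•β)) := by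
    intro n n' hnn'
    simp only [] at hnn'
    by_contra hne
    apply hAβ
    have hsub : ((4*(n:ℚ)-4*n'))•(A - β) = 0 := by
      have hd := sub_eq_zero.mpr hnn'
      rwa [show ((4*(n:ℚ)+5)•A - (4*(n:ℚ)+4)•β) - ((4*(n':ℚ)+5)•A - (4*(n':ℚ)+4)•β)
          = ((4*(n:ℚ)-4*n'))•(A - β) by module] at hd
    rcases smul_eq_zero.mp hsub with h | h
    · exfalso
      apply hne
      have : (n:ℚ) = n' := by linarith
      exact_mod_cast this
    · exact sub_eq_zero.mp h
  exact hfin.not_infinite (Set.infinite_of_injective_forall_mem hinj hSn)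

end Attach

section Main

/-- The height functional. -/
noncomputable def htL : (ι →₀ ℚ) →ₗ[ℚ] ℚ := Finsupp.lsum ℚ fun _ => LinearMap.id

lemma htL_eq (θ : ι →₀ ℚ) : htL θ = ∑ i ∈ θ.support, θ i := by
  simp [htL, Finsupp.sum]

lemma htL_pos {θ : ι →₀ ℚ} (h : θ ∈ R.posRoots) : 0 < htL θ := by
  rw [htL_eq]
  have hne : θ.support.Nonempty := by
    rw [Finsupp.support_nonempty_iff]
    exact R.root_ne_zero h.1
  obtain ⟨i, hi⟩ := hne
  refine Finset.sum_pos' (fun j _ => h.2 j) ⟨i, hi, ?_⟩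
  exact lt_of_le_of_ne (h.2 i) (Ne.symm (Finsupp.mem_support_iff.mp hi))

lemma deg_zero_of_support {deg : (ι →₀ ℚ) →ₗ[ℚ] ℚ} {x : ι →₀ ℚ}
    (h : ↑x.support ⊆ {i : ι | deg (simple i) = 0}) : deg x = 0 := by
  rw [linear_expand deg x]
  apply Finset.sum_eq_zero
  intro i hi
  have h0 : deg (simple i) = 0 := h (Finset.mem_coe.mpr hi)
  rw [h0, mul_zero]

variable {deg : (ι →₀ ℚ) →ₗ[ℚ] ℚ}

/-- Realization of a finite set satisfying (c) as an inversion set. -/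
lemma realize (hdeg : ∀ α ∈ R.Δ, deg α = -1 ∨ deg α = 0 ∨ deg α = 1)
    (hdegpos : ∀ α ∈ R.posRoots, deg α = 0 ∨ deg α = 1) :
    ∀ n (S : Set (ι →₀ ℚ)), S.Finite → S.ncard = n → S ⊆ R.posRoots →
      S ∩ {α ∈ R.posRoots | deg α = 0} = ∅ →
      (∀ α ∈ S, ∀ β ∈ {α ∈ R.posRoots | deg α = 0}, α - β ∈ R.Δ → α - β ∈ S) →
      ∃ w ∈ R.weylGroup, R.inversions w = S := by
  intro n
  induction n using Nat.strong_induction_on with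
  | _ n ih =>
    intro S hfin hcard hpos hS0 hc
    rcases Nat.eq_zero_or_pos n with rfl | hn
    · have hS : S = ∅ := (Set.ncard_eq_zero hfin).mp hcard
      exact ⟨1, one_mem _, by rw [hS, R.inversions_one]⟩
    · have hfne : hfin.toFinset.Nonempty := by
        rw [Set.Finite.toFinset_nonempty]
        rw [Set.nonempty_iff_ne_empty]
        intro h
        rw [h, Set.ncard_empty] at hcard
        omega
      obtain ⟨β, hβmem', hβmax'⟩ := Finset.exists_max_image hfin.toFinset htL hfne
      rw [Set.Finite.mem_toFinset] at hβmem'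
      have hβmax : ∀ α ∈ S, htL α ≤ htL β := by
        intro α hα
        exact hβmax' α (by rw [Set.Finite.mem_toFinset]; exact hα)
      have hfin₁ : (S \ {β}).Finite := hfin.diff
      have hcard₁ : (S \ {β}).ncard = n - 1 := by
        rw [Set.ncard_diff_singleton_of_mem hβmem', hcard]
      have hpos₁ : S \ {β} ⊆ R.posRoots := fun x hx => hpos hx.1
      have hS0₁ : (S \ {β}) ∩ {α ∈ R.posRoots | deg α = 0} = ∅ := by
        rw [Set.eq_empty_iff_forall_notMem]
        rintro x ⟨hx1, hx2⟩
        have : x ∈ S ∩ {α ∈ R.posRoots | deg α = 0} := ⟨hx1.1, hx2⟩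
        rw [hS0] at this
        exact this
      have hc₁ : ∀ α ∈ S \ {β}, ∀ θ ∈ {α ∈ R.posRoots | deg α = 0},
          α - θ ∈ R.Δ → α - θ ∈ S \ {β} := by
        intro α hα θ hθ hΔ
        refine ⟨hc α hα.1 θ hθ hΔ, fun hx => ?_⟩
        have hxβ : α - θ = β := hx
        have hht : htL (α - θ) < htL α := by
          rw [map_sub]
          have := R.htL_pos hθ.1
          linarith
        rw [hxβ] at hht
        exact absurd (hβmax α hα.1) (not_le.mpr hht)
      obtain ⟨w₁, hw₁, hinv₁⟩ := ih (n-1) (by omega) _ hfin₁ hcard₁ hpos₁ hS0₁ hc₁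
      obtain ⟨w₁', hw₁'W, hww', hw'w, hwΔ, hw'Δ⟩ := R.weyl_inv hw₁
      have hslice : R.IsSlice S := R.slice_of_c hdeg hdegpos hpos hS0 hc
      have hco : ∀ p q : ι →₀ ℚ, p ∈ R.posRoots → q ∈ R.posRoots → p + q ∈ S →
          p ∈ S ∨ q ∈ S := fun p q hp hq hpq => R.coclosed_of_slice hslice hp hq hpq
      obtain ⟨j, hj⟩ := R.attach hdeg hdegpos hfin hpos hS0 hco hβmem' hww' hw'w hwΔ hw'Δ hinv₁
      refine ⟨w₁ * R.reflection (simple j), mul_mem hw₁ (R.reflection_mem_weylGroup j), ?_⟩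
      rw [R.inversions_mul_sref hww' hw'w hwΔ (by rw [hj]; exact hpos hβmem')]
      rw [hj, hinv₁, Set.insert_diff_singleton, Set.insert_eq_self.mpr hβmem']

end Main


/-- **Characterization of the inversion sets of `X`-reduced elements.**  Suppose `deg` is
a linear functional with `deg α ∈ {-1, 0, 1}` on roots, `deg α ∈ {0, 1}` on positive
roots, and every root of degree `0` supported in `X := {α ∈ Π : deg α = 0}`; let
`Δ₀⁺ = {α ∈ Δ⁺ : deg α = 0}`.  Then, for a finite `S ⊆ Δ⁺`, the following are
equivalent: (a) `S` is a slice with `S ∩ Δ₀⁺ = ∅`; (b) `S = I(w)` for some `X`-reduced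
`w ∈ W`; (c) `S ∩ Δ₀⁺ = ∅` and for all `α ∈ S` and `β ∈ Δ₀⁺` with `α - β` a root,
`α - β ∈ S`. -/
theorem isSlice_xReduced_iff (deg : (ι →₀ ℚ) →ₗ[ℚ] ℚ)
    (hdeg : ∀ α ∈ R.Δ, deg α = -1 ∨ deg α = 0 ∨ deg α = 1)
    (hdegpos : ∀ α ∈ R.posRoots, deg α = 0 ∨ deg α = 1)
    (hdeg0 : ∀ α ∈ R.Δ, deg α = 0 → ↑α.support ⊆ {i : ι | deg (simple i) = 0})
    (S : Set (ι →₀ ℚ)) (hfin : S.Finite) (hpos : S ⊆ R.posRoots) :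
    ((R.IsSlice S ∧ S ∩ {α ∈ R.posRoots | deg α = 0} = ∅) ↔
      (S ∩ {α ∈ R.posRoots | deg α = 0} = ∅ ∧
        ∀ α ∈ S, ∀ β ∈ {α ∈ R.posRoots | deg α = 0}, α - β ∈ R.Δ → α - β ∈ S)) ∧
    ((∃ w ∈ R.weylGroup,
        R.IsXReduced {i : ι | deg (simple i) = 0} w ∧ S = R.inversions w) ↔
      (S ∩ {α ∈ R.posRoots | deg α = 0} = ∅ ∧
        ∀ α ∈ S, ∀ β ∈ {α ∈ R.posRoots | deg α = 0}, α - β ∈ R.Δ → α - β ∈ S)) := by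
  constructor
  · constructor
    · rintro ⟨hslice, h0⟩
      exact ⟨h0, R.c_of_slice hdeg hdegpos hpos hslice h0⟩
    · rintro ⟨h0, hc⟩
      exact ⟨R.slice_of_c hdeg hdegpos hpos h0 hc, h0⟩
  · constructor
    · rintro ⟨w, hw, hX, hS⟩
      have h := R.c_of_inversions hdeg hdegpos hdeg0 hw hX
      rw [← hS] at h
      exact h
    · rintro ⟨h0, hc⟩
      obtain ⟨w, hw, hinv⟩ := R.realize hdeg hdegpos S.ncard S hfin rfl hpos h0 hc
      refine ⟨w, hw, ?_, hinv.symm⟩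
      show R.inversions w ∩ R.deltaX {i : ι | deg (simple i) = 0} = ∅
      rw [hinv, Set.eq_empty_iff_forall_notMem]
      rintro x ⟨hxS, hxΔ, hsupp⟩
      have hdx : deg x = 0 := deg_zero_of_support hsupp
      have hmem : x ∈ S ∩ {α ∈ R.posRoots | deg α = 0} := ⟨hxS, hpos hxS, hdx⟩
      rw [h0] at hmem
      exact hmem

end SimpleRootSystem
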